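/- Logarithmic asymptotics of the Gaussian-weight superposition: for every σ > 0, the function J(ρ) = ∫_ℝ exp(2γρ² − σ·exp(2γ/σ)) dγ is finite for every ρ ≥ 1, and log J(ρ) / (ρ² · log ρ) tends to 2σ as ρ → +∞. -/

import Mathlib

open Filter Topology MeasureTheory

lemma integrable_exp_neg_abs' : Integrable (fun x : ℝ => Real.exp (-|x|)) := by
  rw [← integrableOn_univ, ← Set.Iic_union_Ioi (a := (0:ℝ)), integrableOn_union]
  constructor
  · apply (integrableOn_exp_Iic 0).congr_fun (fun x hx => ?_) measurableSet_Iic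
    rw [abs_of_nonpos hx, neg_neg]
  · apply ((exp_neg_integrableOn_Ioi 0 one_pos).congr_fun (fun x hx => ?_) measurableSet_Ioi)
    rw [abs_of_pos hx]; ring_nf

lemma integrable_aux (a b c : ℝ) (ha : 1 ≤ a) (hb : 0 < b) (hc : 0 < c) :
    Integrable (fun γ : ℝ => Real.exp (a * γ - b * Real.exp (c * γ))) := by
  have hbc : 0 < b * c ^ 2 := by positivity
  have hK : 0 ≤ (a + 1) ^ 2 / (b * c ^ 2) := by positivity
  have key : ∀ γ : ℝ, a * γ - b * Real.exp (c * γ) ≤ (a + 1) ^ 2 / (b * c ^ 2) - |γ| := by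
    intro γ
    rcases le_or_gt γ 0 with h | h
    · have h1 : 0 < b * Real.exp (c * γ) := by positivity
      have : |γ| = -γ := abs_of_nonpos h
      nlinarith [mul_nonpos_of_nonneg_of_nonpos (sub_nonneg.2 ha) h]
    · have h1 : |γ| = γ := abs_of_pos h
      have h2 : (1 + c * γ / 2) ^ 2 ≤ Real.exp (c * γ) := by
        have := Real.add_one_le_exp (c * γ / 2)
        have h3 : (0:ℝ) < 1 + c * γ / 2 := by positivity
        calc (1 + c * γ / 2) ^ 2 ≤ Real.exp (c * γ / 2) ^ 2 := by nlinarith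
          _ = Real.exp (c * γ) := by rw [← Real.exp_nat_mul]; ring_nf
      have h3 : (c * γ) ^ 2 / 4 ≤ Real.exp (c * γ) := by nlinarith [mul_pos hc h]
      have h4 : b * ((c * γ) ^ 2 / 4) ≤ b * Real.exp (c * γ) :=
        mul_le_mul_of_nonneg_left h3 hb.le
      have h5 : (a + 1) * γ - b * ((c * γ) ^ 2 / 4) ≤ (a + 1) ^ 2 / (b * c ^ 2) := by
        rw [le_div_iff₀ hbc]
        nlinarith [sq_nonneg (b * c ^ 2 * γ / 2 - (a + 1))]
      rw [h1]; linarith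
  apply Integrable.mono' (g := fun γ => Real.exp ((a + 1) ^ 2 / (b * c ^ 2)) * Real.exp (-|γ|))
  · exact integrable_exp_neg_abs'.const_mul _
  · exact (Real.continuous_exp.comp (by continuity)).aestronglyMeasurable
  · filter_upwards with γ
    rw [Real.norm_eq_abs, abs_of_pos (Real.exp_pos _), ← Real.exp_add]
    exact Real.exp_le_exp.2 (by linarith [key γ])

/-- **Logarithmic asymptotics of the Gaussian-weight superposition**: for
`σ > 0`, the integral `J ρ = ∫_ℝ exp (2γρ² - σ e^{2γ/σ}) dγ` is finite for
every `ρ ≥ 1`, and `log (J ρ) / (ρ² log ρ) → 2σ` as `ρ → +∞`. -/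
theorem gaussian_weight_superposition_log_asymptotics (σ : ℝ) (hσ : 0 < σ) :
    (∀ ρ : ℝ, 1 ≤ ρ →
      Integrable (fun γ : ℝ => Real.exp (2 * γ * ρ ^ 2 - σ * Real.exp (2 * γ / σ)))) ∧
    Tendsto (fun ρ : ℝ =>
        Real.log (∫ γ : ℝ, Real.exp (2 * γ * ρ ^ 2 - σ * Real.exp (2 * γ / σ))) /
          (ρ ^ 2 * Real.log ρ))
      atTop (nhds (2 * σ)) := by
  have hInt : ∀ ρ : ℝ, 1 ≤ ρ →
      Integrable (fun γ : ℝ => Real.exp (2 * γ * ρ ^ 2 - σ * Real.exp (2 * γ / σ))) := by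
    intro ρ hρ
    have h := integrable_aux (2 * ρ ^ 2) σ (2 / σ) (by nlinarith) hσ (by positivity)
    exact h.congr (Eventually.of_forall fun γ => by
      show Real.exp (2 * ρ ^ 2 * γ - σ * Real.exp (2 / σ * γ)) = _
      rw [show 2 * ρ ^ 2 * γ = 2 * γ * ρ ^ 2 from by ring, show 2 / σ * γ = 2 * γ / σ from by ring])
  refine ⟨hInt, ?_⟩
  have hCint : Integrable (fun γ : ℝ => Real.exp (2 * γ - σ / 2 * Real.exp (2 * γ / σ))) := by
    have h := integrable_aux 2 (σ / 2) (2 / σ) one_le_two (by positivity) (by positivity)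
    exact h.congr (Eventually.of_forall fun γ => by
      show Real.exp (2 * γ - σ / 2 * Real.exp (2 / σ * γ)) = _
      rw [show (2:ℝ) / σ * γ = 2 * γ / σ from by ring])
  set c : ℝ := Real.log (∫ γ : ℝ, Real.exp (2 * γ - σ / 2 * Real.exp (2 * γ / σ))) with hc
  -- lower bound
  have hlow : ∀ ρ : ℝ, 1 ≤ ρ → 2 * σ * ρ ^ 2 * Real.log ρ - (σ + 2) * ρ ^ 2 ≤
      Real.log (∫ γ : ℝ, Real.exp (2 * γ * ρ ^ 2 - σ * Real.exp (2 * γ / σ))) := by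
    intro ρ hρ
    have hint := hInt ρ hρ
    have hρ0 : (0:ℝ) < ρ := by linarith
    set m : ℝ := 2 * σ * ρ ^ 2 * Real.log ρ - (σ + 2) * ρ ^ 2 with hm
    set s : Set ℝ := Set.Icc (σ * Real.log ρ - 1) (σ * Real.log ρ) with hs
    have hpt : ∀ γ ∈ s, m ≤ 2 * γ * ρ ^ 2 - σ * Real.exp (2 * γ / σ) := by
      rintro γ ⟨hγ1, hγ2⟩
      have hexp : Real.exp (2 * γ / σ) ≤ ρ ^ 2 := by
        have h1 : 2 * γ / σ ≤ Real.log (ρ ^ 2) := by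
          rw [Real.log_pow]; push_cast
          rw [div_le_iff₀ hσ]
          nlinarith
        calc Real.exp (2 * γ / σ) ≤ Real.exp (Real.log (ρ ^ 2)) := Real.exp_le_exp.2 h1
          _ = ρ ^ 2 := Real.exp_log (by positivity)
      have h2 : σ * Real.exp (2 * γ / σ) ≤ σ * ρ ^ 2 :=
        mul_le_mul_of_nonneg_left hexp hσ.le
      have h3 : 2 * (σ * Real.log ρ - 1) * ρ ^ 2 ≤ 2 * γ * ρ ^ 2 := by nlinarith [sq_nonneg ρ]
      rw [hm]; nlinarith
    have hvol : (volume s).toReal = 1 := by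
      rw [hs, Real.volume_Icc]
      rw [show σ * Real.log ρ - (σ * Real.log ρ - 1) = 1 by ring]
      simp
    have h2 : Real.exp m * (volume s).toReal ≤
        ∫ γ in s, Real.exp (2 * γ * ρ ^ 2 - σ * Real.exp (2 * γ / σ)) :=
      setIntegral_ge_of_const_le_real measurableSet_Icc
        (by rw [Real.volume_Icc]; exact ENNReal.ofReal_ne_top)
        (fun γ hγ => Real.exp_le_exp.2 (hpt γ hγ)) hint.integrableOn
    have h1 : (∫ γ in s, Real.exp (2 * γ * ρ ^ 2 - σ * Real.exp (2 * γ / σ))) ≤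
        ∫ γ : ℝ, Real.exp (2 * γ * ρ ^ 2 - σ * Real.exp (2 * γ / σ)) :=
      setIntegral_le_integral hint (Eventually.of_forall fun γ => (Real.exp_pos _).le)
    have hJ : Real.exp m ≤ ∫ γ : ℝ, Real.exp (2 * γ * ρ ^ 2 - σ * Real.exp (2 * γ / σ)) := by
      rw [hvol, mul_one] at h2; linarith
    exact (Real.le_log_iff_exp_le (lt_of_lt_of_le (Real.exp_pos m) hJ)).2 hJ
  -- upper bound
  have hup : ∀ ρ : ℝ, 2 ≤ ρ →
      Real.log (∫ γ : ℝ, Real.exp (2 * γ * ρ ^ 2 - σ * Real.exp (2 * γ / σ))) ≤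
        σ * (ρ ^ 2 - 1) * Real.log (2 * (ρ ^ 2 - 1)) + c := by
    intro ρ hρ
    have hint := hInt ρ (by linarith)
    have hCpos : 0 < ∫ γ : ℝ, Real.exp (2 * γ - σ / 2 * Real.exp (2 * γ / σ)) :=
      integral_exp_pos hCint
    have hk : (0:ℝ) < ρ ^ 2 - 1 := by nlinarith
    set U : ℝ := σ * (ρ ^ 2 - 1) * Real.log (2 * (ρ ^ 2 - 1)) with hU
    have hpt : ∀ γ : ℝ, Real.exp (2 * γ * ρ ^ 2 - σ * Real.exp (2 * γ / σ)) ≤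
        Real.exp U * Real.exp (2 * γ - σ / 2 * Real.exp (2 * γ / σ)) := by
      intro γ
      rw [← Real.exp_add]
      apply Real.exp_le_exp.2
      set u : ℝ := Real.exp (2 * γ / σ) with hu
      have hupos : 0 < u := Real.exp_pos _
      have hlog : Real.log (u / (2 * (ρ ^ 2 - 1))) ≤ u / (2 * (ρ ^ 2 - 1)) - 1 :=
        Real.log_le_sub_one_of_pos (by positivity)
      rw [Real.log_div hupos.ne' (by positivity), hu, Real.log_exp] at hlog
      have h2 := mul_le_mul_of_nonneg_left hlog (le_of_lt (mul_pos hσ hk))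
      have e1 : σ * (ρ ^ 2 - 1) * (2 * γ / σ - Real.log (2 * (ρ ^ 2 - 1))) =
          2 * γ * (ρ ^ 2 - 1) - σ * (ρ ^ 2 - 1) * Real.log (2 * (ρ ^ 2 - 1)) := by
        field_simp
      have e2 : σ * (ρ ^ 2 - 1) * (u / (2 * (ρ ^ 2 - 1)) - 1) =
          σ * u / 2 - σ * (ρ ^ 2 - 1) := by
        field_simp
      rw [e1, e2] at h2
      rw [hU]
      nlinarith [mul_pos hσ hk]
    have hle : (∫ γ : ℝ, Real.exp (2 * γ * ρ ^ 2 - σ * Real.exp (2 * γ / σ))) ≤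
        Real.exp U * ∫ γ : ℝ, Real.exp (2 * γ - σ / 2 * Real.exp (2 * γ / σ)) := by
      rw [← integral_const_mul]
      exact integral_mono hint (hCint.const_mul _) hpt
    have hJpos : 0 < ∫ γ : ℝ, Real.exp (2 * γ * ρ ^ 2 - σ * Real.exp (2 * γ / σ)) :=
      integral_exp_pos hint
    calc Real.log (∫ γ : ℝ, Real.exp (2 * γ * ρ ^ 2 - σ * Real.exp (2 * γ / σ)))
        ≤ Real.log (Real.exp U *
            ∫ γ : ℝ, Real.exp (2 * γ - σ / 2 * Real.exp (2 * γ / σ))) :=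
          Real.log_le_log hJpos hle
      _ = U + c := by rw [Real.log_mul (Real.exp_ne_zero _) hCpos.ne', Real.log_exp, hc]
  -- limits of the bounding functions
  have hloT : Tendsto (fun ρ : ℝ => 2 * σ - (σ + 2) * (Real.log ρ)⁻¹) atTop (nhds (2 * σ)) := by
    have hL : Tendsto (fun ρ : ℝ => (Real.log ρ)⁻¹) atTop (nhds 0) :=
      Real.tendsto_log_atTop.inv_tendsto_atTop
    have h := tendsto_const_nhds (x := 2 * σ) (f := atTop (α := ℝ)) |>.sub (hL.const_mul (σ + 2))
    simpa using h
  have hhiT : Tendsto (fun ρ : ℝ => σ * (1 - (ρ⁻¹) ^ 2) *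
      (2 + Real.log (2 - 2 * (ρ⁻¹) ^ 2) * (Real.log ρ)⁻¹) + c * (ρ ^ 2 * Real.log ρ)⁻¹)
      atTop (nhds (2 * σ)) := by
    have hinv : Tendsto (fun ρ : ℝ => (ρ⁻¹) ^ 2) atTop (nhds 0) := by
      simpa using (tendsto_inv_atTop_zero.pow 2 :
        Tendsto (fun ρ : ℝ => (ρ⁻¹) ^ 2) atTop (nhds (0 ^ 2)))
    have hL : Tendsto (fun ρ : ℝ => (Real.log ρ)⁻¹) atTop (nhds 0) :=
      Real.tendsto_log_atTop.inv_tendsto_atTop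
    have hD : Tendsto (fun ρ : ℝ => Real.log (2 - 2 * (ρ⁻¹) ^ 2)) atTop (nhds (Real.log 2)) := by
      have h2 : Tendsto (fun ρ : ℝ => 2 - 2 * (ρ⁻¹) ^ 2) atTop (nhds 2) := by
        simpa using (tendsto_const_nhds.sub (hinv.const_mul 2))
      exact ((Real.continuousAt_log (by norm_num)).tendsto.comp h2)
    have hlast : Tendsto (fun ρ : ℝ => (ρ ^ 2 * Real.log ρ)⁻¹) atTop (nhds 0) :=
      ((tendsto_pow_atTop (two_ne_zero)).atTop_mul_atTop₀
        Real.tendsto_log_atTop).inv_tendsto_atTop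
    have h : Tendsto (fun ρ : ℝ => σ * (1 - (ρ⁻¹) ^ 2) *
        (2 + Real.log (2 - 2 * (ρ⁻¹) ^ 2) * (Real.log ρ)⁻¹) + c * (ρ ^ 2 * Real.log ρ)⁻¹)
        atTop (nhds (σ * (1 - 0) * (2 + Real.log 2 * 0) + c * 0)) :=
      (((tendsto_const_nhds).mul (tendsto_const_nhds.sub hinv)).mul
        ((tendsto_const_nhds).add (hD.mul hL))).add ((tendsto_const_nhds).mul hlast)
    have he : σ * (1 - 0) * (2 + Real.log 2 * 0) + c * 0 = 2 * σ := by ring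
    rwa [he] at h
  -- squeeze
  apply tendsto_of_tendsto_of_tendsto_of_le_of_le' hloT hhiT
  · filter_upwards [eventually_ge_atTop (2:ℝ)] with ρ hρ
    have hρ1 : (1:ℝ) < ρ := by linarith
    have hL : 0 < Real.log ρ := Real.log_pos hρ1
    have hρ0 : (0:ℝ) < ρ := by linarith
    have hden : 0 < ρ ^ 2 * Real.log ρ := by positivity
    have h := hlow ρ (by linarith)
    have heq : (2 * σ * ρ ^ 2 * Real.log ρ - (σ + 2) * ρ ^ 2) / (ρ ^ 2 * Real.log ρ) =
        2 * σ - (σ + 2) * (Real.log ρ)⁻¹ := by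
      field_simp
    rw [← heq]
    gcongr
  · filter_upwards [eventually_ge_atTop (2:ℝ)] with ρ hρ
    have hρ1 : (1:ℝ) < ρ := by linarith
    have hL : 0 < Real.log ρ := Real.log_pos hρ1
    have hρ0 : (0:ℝ) < ρ := by linarith
    have hden : 0 < ρ ^ 2 * Real.log ρ := by positivity
    have h := hup ρ hρ
    have hk : (0:ℝ) < ρ ^ 2 - 1 := by nlinarith
    have h2pos : (0:ℝ) < 2 - 2 * (ρ⁻¹) ^ 2 := by
      have : (ρ ^ 2)⁻¹ < 1 := by
        apply inv_lt_one_of_one_lt₀; nlinarith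
      rw [inv_pow] at *
      linarith
    have hlogeq : Real.log (2 * (ρ ^ 2 - 1)) =
        Real.log (2 - 2 * (ρ⁻¹) ^ 2) + 2 * Real.log ρ := by
      have h1 : 2 * (ρ ^ 2 - 1) = (2 - 2 * (ρ⁻¹) ^ 2) * ρ ^ 2 := by
        field_simp
      rw [h1, Real.log_mul h2pos.ne' (by positivity), Real.log_pow]
      push_cast; ring
    have heq2 : (σ * (ρ ^ 2 - 1) * Real.log (2 * (ρ ^ 2 - 1)) + c) / (ρ ^ 2 * Real.log ρ) =
        σ * (1 - (ρ⁻¹) ^ 2) * (2 + Real.log (2 - 2 * (ρ⁻¹) ^ 2) * (Real.log ρ)⁻¹) +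
          c * (ρ ^ 2 * Real.log ρ)⁻¹ := by
      rw [hlogeq]; field_simp; ring
    rw [← heq2]
    gcongr
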